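/- Let p : [0,T] × ℝⁿ → ℝ be C^{1,2} with p(t,x) > 0 everywhere, satisfying the Fokker–Planck equation ∂ₜp(t,x) = (1/2)β(t)²[x·∇p(t,x) + n·p(t,x) + Δp(t,x)]. Define u(t,x) = log p(T-t, x) - (n/2)∫₀^{T-t} β(s)² ds + log c for a constant c > 0. Then u satisfies the semi-linear PDE ∂ₜu(t,x) + β̄(t)²[(1/2)x + ∇u(t,x)]·∇u(t,x) + (1/2)β̄(t)²Δu(t,x) - (1/2)‖β̄(t)∇u(t,x)‖² = 0, where β̄(t) = β(T-t), with terminal condition u(T,x) = log(c·p(0,x)). -/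

import Mathlib

open Set intervalIntegral
open scoped RealInnerProductSpace

/-- Spatial Laplacian: sum of second partial derivatives along the coordinate axes. -/
noncomputable def lap {n : ℕ} (f : EuclideanSpace ℝ (Fin n) → ℝ)
    (x : EuclideanSpace ℝ (Fin n)) : ℝ :=
  ∑ i : Fin n, fderiv ℝ (fun y => fderiv ℝ f y (EuclideanSpace.single i 1)) x
    (EuclideanSpace.single i 1)


section Helpers
open InnerProductSpace

variable {n : ℕ}

lemma grad_add_const (f : EuclideanSpace ℝ (Fin n) → ℝ) (C : ℝ) (x) :
    gradient (fun y => f y + C) x = gradient f x := by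
  unfold gradient; rw [fderiv_add_const]

lemma lap_add_const (f : EuclideanSpace ℝ (Fin n) → ℝ) (C : ℝ) (x) :
    lap (fun y => f y + C) x = lap f x := by
  unfold lap
  congr 1; funext i
  have : (fun y => fderiv ℝ (fun z => f z + C) y (EuclideanSpace.single i 1))
      = fun y => fderiv ℝ f y (EuclideanSpace.single i 1) := by
    funext y; rw [fderiv_add_const]
  rw [this]

lemma grad_log {f : EuclideanSpace ℝ (Fin n) → ℝ} (hf : Differentiable ℝ f)
    (hpos : ∀ y, 0 < f y) (x) :
    gradient (fun y => Real.log (f y)) x = (f x)⁻¹ • gradient f x := by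
  unfold gradient
  rw [((hf x).hasFDerivAt.log (hpos x).ne').fderiv, map_smul]

lemma inner_grad (f : EuclideanSpace ℝ (Fin n) → ℝ) (x v) :
    ⟪gradient f x, v⟫ = fderiv ℝ f x v := toDual_symm_apply

lemma sum_sq_fderiv {f : EuclideanSpace ℝ (Fin n) → ℝ} (x) :
    ∑ i : Fin n, (fderiv ℝ f x (EuclideanSpace.single i 1))^2 = ‖gradient f x‖^2 := by
  rw [← real_inner_self_eq_norm_sq]
  simp_rw [← inner_grad f x]
  rw [PiLp.inner_apply]
  congr 1; funext i
  simp [EuclideanSpace.inner_single_right, sq]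
  rw [← inner_grad f x, EuclideanSpace.inner_single_right]; simp

lemma lap_log {f : EuclideanSpace ℝ (Fin n) → ℝ} (hf : ContDiff ℝ 2 f)
    (hpos : ∀ y, 0 < f y) (x) :
    lap (fun y => Real.log (f y)) x
      = (f x)⁻¹ * lap f x - ((f x)⁻¹)^2 * ‖gradient f x‖^2 := by
  have hdf : Differentiable ℝ f := hf.differentiable two_ne_zero
  have hfd1 : ContDiff ℝ 1 (fderiv ℝ f) := hf.fderiv_right (by norm_num)
  have hDi : ∀ v : EuclideanSpace ℝ (Fin n),
      Differentiable ℝ (fun y => fderiv ℝ f y v) := fun v =>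
    (ContinuousLinearMap.apply ℝ ℝ v).differentiable.comp (hfd1.differentiable one_ne_zero)
  have hlogfd : ∀ y, fderiv ℝ (fun z => Real.log (f z)) y = (f y)⁻¹ • fderiv ℝ f y :=
    fun y => ((hdf y).hasFDerivAt.log (hpos y).ne').fderiv
  have key : ∀ v : EuclideanSpace ℝ (Fin n),
      fderiv ℝ (fun y => fderiv ℝ (fun z => Real.log (f z)) y v) x v
        = (f x)⁻¹ * fderiv ℝ (fun y => fderiv ℝ f y v) x v
          - ((f x)⁻¹)^2 * (fderiv ℝ f x v)^2 := by
    intro v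
    have he : (fun y => fderiv ℝ (fun z => Real.log (f z)) y v)
        = fun y => (f y)⁻¹ * fderiv ℝ f y v := by
      funext y; rw [hlogfd y]; rfl
    rw [he]
    have hinv : HasFDerivAt (fun y => (f y)⁻¹)
        ((-((f x)^2)⁻¹ : ℝ) • fderiv ℝ f x) x :=
      (hasDerivAt_inv (hpos x).ne').comp_hasFDerivAt x ((hdf x).hasFDerivAt)
    have hmul := (hinv.mul ((hDi v x).hasFDerivAt)).fderiv
    rw [show (fun y => (f y)⁻¹ * fderiv ℝ f y v) = ((fun y => (f y)⁻¹) * fun y => fderiv ℝ f y v) from rfl, hmul]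
    simp only [ContinuousLinearMap.add_apply, ContinuousLinearMap.smul_apply,
      smul_eq_mul]
    try ring
  unfold lap
  simp_rw [key]
  rw [Finset.sum_sub_distrib, ← Finset.mul_sum, ← Finset.mul_sum, sum_sq_fderiv]

end Helpers

/-- The logarithmic time-reversal transform `u(t,x) = log p(T-t,x) - (n/2)∫₀^{T-t}β(s)²ds + log c`
of a positive `C^{1,2}` solution of the Fokker–Planck equation
`∂ₜp = (1/2)β(t)²[x·∇p + n p + Δp]` solves the semi-linear PDE
`∂ₜu + β̄(t)²[(1/2)x + ∇u]·∇u + (1/2)β̄(t)²Δu - (1/2)‖β̄(t)∇u‖² = 0` with `β̄(t) = β(T-t)`,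
and satisfies the terminal condition `u(T,x) = log(c·p(0,x))`. -/
theorem stmt_2 (n : ℕ) (T : ℝ) (hT : 0 < T) (c : ℝ) (hc : 0 < c)
    (β : ℝ → ℝ) (hβcont : Continuous β) (hβpos : ∀ t, 0 < β t)
    (p : ℝ → EuclideanSpace ℝ (Fin n) → ℝ)
    (hp_space : ∀ t, ContDiff ℝ 2 (p t))
    (hp_time : ∀ x, Differentiable ℝ (fun s => p s x))
    (hp_pos : ∀ t x, 0 < p t x)
    (hFP : ∀ t ∈ Icc 0 T, ∀ x, deriv (fun s => p s x) t
      = (1 / 2) * (β t) ^ 2 * (⟪x, gradient (p t) x⟫ + n * p t x + lap (p t) x))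
    (u : ℝ → EuclideanSpace ℝ (Fin n) → ℝ)
    (hu : ∀ t x, u t x = Real.log (p (T - t) x)
        - ((n : ℝ) / 2) * (∫ s in (0:ℝ)..(T - t), (β s) ^ 2) + Real.log c) :
    (∀ t ∈ Icc 0 T, ∀ x,
      deriv (fun s => u s x) t
        + (β (T - t)) ^ 2 * ⟪(1 / 2 : ℝ) • x + gradient (u t) x, gradient (u t) x⟫
        + (1 / 2) * (β (T - t)) ^ 2 * lap (u t) x
        - (1 / 2) * ‖β (T - t) • gradient (u t) x‖ ^ 2 = 0) ∧
    (∀ x, u T x = Real.log (c * p 0 x)) := by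
  constructor
  · intro t ht x
    set s : ℝ := T - t with hs
    have hsI : s ∈ Icc (0:ℝ) T := ⟨by simp [hs]; linarith [ht.2], by simp [hs]; linarith [ht.1]⟩
    set f : EuclideanSpace ℝ (Fin n) → ℝ := p s with hf
    have hdf : Differentiable ℝ f := (hp_space s).differentiable two_ne_zero
    have hfpos : ∀ y, 0 < f y := fun y => hp_pos s y
    set P : ℝ := f x with hP
    have hP0 : P ≠ 0 := (hfpos x).ne'
    set g : EuclideanSpace ℝ (Fin n) := gradient f x with hg
    set L : ℝ := lap f x with hL
    set b : ℝ := β s with hb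
    -- time derivative
    have h1 : HasDerivAt (fun r : ℝ => T - r) (-1) t := by
      simpa using (hasDerivAt_id t).const_sub T
    have h2 : HasDerivAt (fun r => p r x) (deriv (fun r => p r x) s) s :=
      (hp_time x s).hasDerivAt
    have h3 : HasDerivAt (fun r : ℝ => p (T - r) x) (deriv (fun r => p r x) s * (-1)) t :=
      by have := h2.comp t h1; exact this
    have h4 : HasDerivAt (fun r : ℝ => Real.log (p (T - r) x))
        (deriv (fun r => p r x) s * (-1) / P) t := h3.log (hp_pos s x).ne'
    have h5 : HasDerivAt (fun r : ℝ => ∫ τ in (0:ℝ)..r, (β τ)^2) ((β s)^2) s :=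
      ((hβcont.pow 2).integral_hasStrictDerivAt 0 s).hasDerivAt
    have h6 : HasDerivAt (fun r : ℝ => ∫ τ in (0:ℝ)..(T - r), (β τ)^2) ((β s)^2 * (-1)) t :=
      by have := h5.comp t h1; exact this
    have h7 : HasDerivAt (fun r : ℝ => u r x)
        (deriv (fun r => p r x) s * (-1) / P - (n : ℝ)/2 * ((β s)^2 * (-1))) t := by
      have := (h4.sub (h6.const_mul ((n : ℝ)/2))).add_const (Real.log c)
      have hfun : (fun r : ℝ => u r x) = fun r => (Real.log (p (T - r) x)
          - (n : ℝ)/2 * ∫ τ in (0:ℝ)..(T - r), (β τ)^2) + Real.log c := by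
        funext r; rw [hu r x]
      rw [hfun]; exact this
    have hderiv : deriv (fun r => u r x) t
        = deriv (fun r => p r x) s * (-1) / P - (n : ℝ)/2 * ((β s)^2 * (-1)) := h7.deriv
    have hFP' : deriv (fun r => p r x) s
        = (1/2) * b^2 * (⟪x, g⟫ + n * P + L) := hFP s hsI x
    -- spatial derivatives of u t
    have hut : u t = fun y => Real.log (f y) +
        (Real.log c - (n : ℝ)/2 * (∫ τ in (0:ℝ)..s, (β τ)^2)) := by
      funext y; rw [hu t y]; ring
    have hgradu : gradient (u t) x = P⁻¹ • g := by
      rw [hut, grad_add_const, grad_log hdf hfpos]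
    have hlapu : lap (u t) x = P⁻¹ * L - (P⁻¹)^2 * ‖g‖^2 := by
      rw [hut, lap_add_const, lap_log (hp_space s) hfpos]
    rw [hderiv, hFP', hgradu, hlapu]
    simp only [inner_add_left, real_inner_smul_left, real_inner_smul_right,
      real_inner_self_eq_norm_sq, norm_smul, Real.norm_eq_abs, mul_pow, sq_abs]
    field_simp
    ring
  · intro x
    rw [hu T x]
    simp [Real.log_mul hc.ne' (hp_pos 0 x).ne', add_comm]
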